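/- Let 0 < λ < 1, 0 < Λ < 1, with A := ln λ / ln Λ irrational and A > 0, and let τ, ψ, ξ ∈ ℝ. Suppose (n_k) and (m_k) are sequences of natural numbers tending to infinity with m_k = A·n_k + τ + O(1/n_k). Then ψ·Λ^(m_k) − ξ·λ^(n_k) = (ψ·Λ^τ − ξ)·λ^(n_k) + o(λ^(n_k)) as k → ∞. -/

import Mathlib

open Filter Asymptotics

theorem stmt_16 (lam Lam A τ ψ ξ : ℝ)
    (hlam0 : 0 < lam) (hlam1 : lam < 1) (hLam0 : 0 < Lam) (hLam1 : Lam < 1)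
    (hA : A = Real.log lam / Real.log Lam) (hAirr : Irrational A) (hApos : 0 < A)
    (n m : ℕ → ℕ) (hn : Tendsto n atTop atTop)
    (hm : ∃ K : ℝ, ∀ k : ℕ, 0 < n k →
      |(m k : ℝ) - (A * n k + τ)| ≤ K / n k) :
    (fun k => ψ * Lam ^ (m k) - ξ * lam ^ (n k) - (ψ * Lam ^ τ - ξ) * lam ^ (n k))
      =o[atTop] fun k => lam ^ (n k) := by
  set ε : ℕ → ℝ := fun k => (m k : ℝ) - (A * n k + τ) with hε
  obtain ⟨K, hK⟩ := hm
  have hKlim : Tendsto (fun k => K / (n k : ℝ)) atTop (nhds 0) :=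
    (tendsto_const_div_atTop_nhds_zero_nat K).comp hn
  have hεlim : Tendsto ε atTop (nhds 0) := by
    apply squeeze_zero_norm' _ hKlim
    filter_upwards [hn.eventually_gt_atTop 0] with k hk
    simpa using hK k hk
  have hlogΛ : Real.log Lam ≠ 0 := (Real.log_neg hLam0 hLam1).ne
  have hpow : Lam ^ A = lam := by
    rw [hA, Real.rpow_def_of_pos hLam0, mul_comm, div_mul_cancel₀ _ hlogΛ, Real.exp_log hlam0]
  have key : ∀ k, ψ * Lam ^ (m k) - ξ * lam ^ (n k) - (ψ * Lam ^ τ - ξ) * lam ^ (n k)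
      = (ψ * Lam ^ τ * (Lam ^ (ε k) - 1)) * lam ^ (n k) := by
    intro k
    have hmk : (m k : ℝ) = A * n k + τ + ε k := by simp [hε]
    have h1 : Lam ^ (m k) = lam ^ (n k) * Lam ^ τ * Lam ^ (ε k) := by
      calc Lam ^ (m k) = Lam ^ ((m k : ℝ)) := (Real.rpow_natCast Lam (m k)).symm
        _ = Lam ^ (A * n k) * Lam ^ τ * Lam ^ (ε k) := by
            rw [hmk, Real.rpow_add hLam0, Real.rpow_add hLam0]
        _ = lam ^ (n k) * Lam ^ τ * Lam ^ (ε k) := by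
            rw [Real.rpow_mul hLam0.le, hpow, Real.rpow_natCast]
    rw [h1]; ring
  have hexp : Tendsto (fun k => Lam ^ (ε k)) atTop (nhds 1) := by
    have h1 : Tendsto (fun k => Real.exp (ε k * Real.log Lam)) atTop (nhds 1) := by
      have h2 := hεlim.mul_const (Real.log Lam)
      simpa [Function.comp_def] using (Real.continuous_exp.tendsto 0).comp (by simpa using h2)
    refine h1.congr fun k => ?_
    rw [Real.rpow_def_of_pos hLam0, mul_comm]
  have hg : Tendsto (fun k => ψ * Lam ^ τ * (Lam ^ (ε k) - 1)) atTop (nhds 0) := by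
    have := (hexp.sub (tendsto_const_nhds (x := (1:ℝ)))).const_mul (ψ * Lam ^ τ)
    simpa using this
  have ho : (fun k => ψ * Lam ^ τ * (Lam ^ (ε k) - 1)) =o[atTop] (fun _ : ℕ => (1:ℝ)) :=
    (isLittleO_one_iff ℝ).mpr hg
  have hfin := ho.mul_isBigO (isBigO_refl (fun k => lam ^ (n k)) atTop)
  simp only [key]
  simpa using hfin
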